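/- arXiv:2504.01516 — 3 statements merged into one kernel-verified Lean document; each statement's English description precedes it below -/
import Mathlib

section
/- For integers k_1,…,k_{N-1}, if k_1 = 0 and for every i with 2 ≤ i ≤ N-2 we have -k_{i-1}/2 + 3k_i/4 - Σ_{j=i+1}^{N-1} k_j/2^j = 0, and additionally -k_{N-2}/2 + 3k_{N-1}/4 = 0, then k_i = 0 for all i = 1,…,N-1. -/
lemma geo_sum : ∀ (b a : ℕ), a ≤ b + 1 →
    ∑ j ∈ Finset.Icc a b, ((1:ℚ)/2) ^ j = 2 * (1/2) ^ a - (1/2) ^ b := by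
  intro b
  induction b with
  | zero =>
    intro a ha
    interval_cases a <;> norm_num
  | succ b ih =>
    intro a ha
    rcases Nat.lt_or_ge a (b + 2) with h | h
    · have h' : a ≤ b + 1 := by omega
      rw [Finset.sum_Icc_succ_top h', ih a h']
      ring
    · have : a = b + 2 := by omega
      subst this
      rw [Finset.Icc_eq_empty (by omega), Finset.sum_empty]
      ring

/-- Integer solutions of the linear system `A·k = 0` arising in the SU(N)
Euler-angle integral computation: if `k₁ = 0`, the middle equations
`-k_{i-1}/2 + 3 k_i/4 - ∑_{j=i+1}^{N-1} k_j/2^j = 0` hold for `2 ≤ i ≤ N-2`,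
and `-k_{N-2}/2 + 3 k_{N-1}/4 = 0`, then `k_i = 0` for all `1 ≤ i ≤ N-1`. -/
theorem suN_fourier_exponents_vanish (N : ℕ) (hN : 2 ≤ N) (k : ℕ → ℤ)
    (h1 : k 1 = 0)
    (hmid : ∀ i : ℕ, 2 ≤ i → i ≤ N - 2 →
      -(k (i - 1) : ℚ) / 2 + 3 * (k i : ℚ) / 4
        - ∑ j ∈ Finset.Icc (i + 1) (N - 1), (k j : ℚ) / 2 ^ j = 0)
    (hlast : -(k (N - 2) : ℚ) / 2 + 3 * (k (N - 1) : ℚ) / 4 = 0) :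
    ∀ i : ℕ, 1 ≤ i → i ≤ N - 1 → k i = 0 := by
  obtain ⟨i₀, hi₀mem, hmax⟩ := Finset.exists_max_image (Finset.Icc 1 (N-1))
    (fun j => |k j|) ⟨1, by simp; omega⟩
  rw [Finset.mem_Icc] at hi₀mem
  set M : ℚ := |(k i₀ : ℚ)| with hMdef
  have hmaxq : ∀ j, 1 ≤ j → j ≤ N - 1 → |(k j : ℚ)| ≤ M := by
    intro j hj1 hj2
    have := hmax j (Finset.mem_Icc.mpr ⟨hj1, hj2⟩)
    have : ((|k j| : ℤ) : ℚ) ≤ ((|k i₀| : ℤ) : ℚ) := by exact_mod_cast this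
    push_cast at this
    exact this
  suffices hM : M ≤ 0 by
    intro i h1i h2i
    have := hmaxq i h1i h2i
    have : |(k i : ℚ)| = 0 := le_antisymm (this.trans hM) (abs_nonneg _)
    have : (k i : ℚ) = 0 := abs_eq_zero.mp this
    exact_mod_cast this
  by_contra hM
  push_neg at hM
  -- i₀ ≥ 2, since k 1 = 0 would give M = 0
  have hi2 : 2 ≤ i₀ := by
    by_contra h
    have : i₀ = 1 := by omega
    rw [this, h1] at hMdef
    simp at hMdef
    exact absurd hMdef (by linarith)
  -- the uniform equation at i₀
  have E : -(k (i₀ - 1) : ℚ) / 2 + 3 * (k i₀ : ℚ) / 4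
      - ∑ j ∈ Finset.Icc (i₀ + 1) (N - 1), (k j : ℚ) / 2 ^ j = 0 := by
    rcases Nat.lt_or_ge (N - 2) i₀ with h | h
    · have hi₀ : i₀ = N - 1 := by omega
      rw [hi₀, Finset.Icc_eq_empty (by omega), Finset.sum_empty]
      have h2 : N - 1 - 1 = N - 2 := by omega
      rw [h2]
      linarith [hlast]
    · exact hmid i₀ hi2 h
  -- bound the tail sum
  set S : ℚ := ∑ j ∈ Finset.Icc (i₀ + 1) (N - 1), (k j : ℚ) / 2 ^ j with hSdef
  have hS : |S| ≤ M * (2 * (1/2 : ℚ) ^ (i₀ + 1) - (1/2) ^ (N - 1)) := by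
    calc |S| ≤ ∑ j ∈ Finset.Icc (i₀ + 1) (N - 1), |(k j : ℚ) / 2 ^ j| :=
          Finset.abs_sum_le_sum_abs _ _
      _ ≤ ∑ j ∈ Finset.Icc (i₀ + 1) (N - 1), M * (1/2) ^ j := by
          apply Finset.sum_le_sum
          intro j hj
          rw [Finset.mem_Icc] at hj
          have hkj : |(k j : ℚ)| ≤ M := hmaxq j (by omega) (by omega)
          have h2 : |(k j : ℚ) / 2 ^ j| = |(k j : ℚ)| * (1/2) ^ j := by
            rw [abs_div, abs_pow]
            norm_num [div_eq_mul_inv, ← inv_pow]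
          rw [h2]
          exact mul_le_mul_of_nonneg_right hkj (by positivity)
      _ = M * ∑ j ∈ Finset.Icc (i₀ + 1) (N - 1), ((1:ℚ)/2) ^ j := by
          rw [Finset.mul_sum]
      _ = M * (2 * (1/2 : ℚ) ^ (i₀ + 1) - (1/2) ^ (N - 1)) := by
          rw [geo_sum (N - 1) (i₀ + 1) (by omega)]
  -- bound on k (i₀ - 1)
  have hprev : |(k (i₀ - 1) : ℚ)| ≤ M := hmaxq (i₀ - 1) (by omega) (by omega)
  -- from E: 3 k_{i₀} / 4 = k_{i₀-1}/2 + S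
  have hE' : 3 * (k i₀ : ℚ) / 4 = (k (i₀ - 1) : ℚ) / 2 + S := by linarith [E]
  have habs : 3 * M / 4 ≤ M / 2 + M * (2 * (1/2 : ℚ) ^ (i₀ + 1) - (1/2) ^ (N - 1)) := by
    have h1 : |3 * (k i₀ : ℚ) / 4| = 3 * M / 4 := by
      rw [abs_div, abs_mul]
      norm_num
      exact hMdef.symm
    have h2 : |(k (i₀ - 1) : ℚ) / 2 + S| ≤ M / 2 + M * (2 * (1/2 : ℚ) ^ (i₀ + 1) - (1/2) ^ (N - 1)) := by
      calc |(k (i₀ - 1) : ℚ) / 2 + S| ≤ |(k (i₀ - 1) : ℚ) / 2| + |S| := abs_add_le _ _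
        _ ≤ M / 2 + M * (2 * (1/2 : ℚ) ^ (i₀ + 1) - (1/2) ^ (N - 1)) := by
            rw [abs_div]
            have : |(2:ℚ)| = 2 := by norm_num
            rw [this]
            gcongr
      -- done
    rw [← h1, hE']
    exact h2
  -- derive contradiction
  have hpow1 : ((1:ℚ)/2) ^ i₀ ≤ (1/2) ^ 2 := pow_le_pow_of_le_one (by norm_num) (by norm_num) hi2
  have hpow2 : (0:ℚ) < (1/2) ^ (N - 1) := by positivity
  have hsucc : ((1:ℚ)/2) ^ (i₀ + 1) = (1/2) ^ i₀ * (1/2) := pow_succ _ _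
  rw [hsucc] at habs
  nlinarith [habs, hM, hpow1, hpow2]
end

section
/- Let N ≥ 3, K = {diag(A,1)·e^{ω λ} : A ∈ SU(N-1), ω ∈ [0,2π)} ⊆ SU(N) where λ = λ_{N²-1} = i·diag(0,…,0,1,-1)-type generator (the (N-1,N) Cartan generator of su(N)), and let a = ℝ·λ_{N²-2} where λ_{N²-2} is the real rotation generator in the (N-1,N)-plane (entries: (N-1,N)-entry 1, (N,N-1)-entry -1, zeros elsewhere). Then the centralizer Z_K(a) = {diag(B, e^{-ix}, e^{-ix}) : B ∈ U(N-2), x ∈ ℝ, det(B)·e^{-2ix} = 1}. -/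
open Complex Matrix NormedSpace

/-- The diagonal generator `λ_{N²-1} = i(E_{N-1,N-1} - E_{N,N})` as an `N×N` matrix. -/
def lamD (N k : ℕ) : Matrix (Fin N) (Fin N) ℂ :=
  Matrix.diagonal fun i =>
    if i.val = k - 2 then Complex.I else if i.val = k - 1 then -Complex.I else 0

/-- The rotation generator `λ_{N²-2} = E_{N-1,N} - E_{N,N-1}` as an `N×N` matrix. -/
def lamR (N k : ℕ) : Matrix (Fin N) (Fin N) ℂ := fun i j =>
  if i.val = k - 2 ∧ j.val = k - 1 then 1
  else if i.val = k - 1 ∧ j.val = k - 2 then -1 else 0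

/-- The `N×N` matrix with upper-left `n×n` block `B` and diagonal entries `d i`
in the remaining positions. -/
def embedBlock (N n : ℕ) (B : Matrix (Fin n) (Fin n) ℂ) (d : ℕ → ℂ) :
    Matrix (Fin N) (Fin N) ℂ := fun i j =>
  if hi : i.val < n then (if hj : j.val < n then B ⟨i.val, hi⟩ ⟨j.val, hj⟩ else 0)
  else if i.val = j.val then d i.val else 0

/-- The subgroup `K = {diag(A,1)·e^{ωλ_{N²-1}} : A ∈ SU(N-1), ω ∈ [0,2π)} ⊆ SU(N)`. -/
noncomputable def Ksub (N : ℕ) : Set (Matrix (Fin N) (Fin N) ℂ) :=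
  {g | ∃ A : Matrix (Fin (N - 1)) (Fin (N - 1)) ℂ, ∃ ω ∈ Set.Ico (0:ℝ) (2 * Real.pi),
    Aᴴ * A = 1 ∧ A.det = 1 ∧
    g = embedBlock N (N - 1) A (fun _ => 1) * NormedSpace.exp ((ω : ℂ) • lamD N N)}

/- ### Auxiliary lemmas -/

lemma embedBlock_apply_lt {N n : ℕ} (B : Matrix (Fin n) (Fin n) ℂ) (d : ℕ → ℂ)
    {i j : Fin N} (hi : i.val < n) (hj : j.val < n) :
    embedBlock N n B d i j = B ⟨i.val, hi⟩ ⟨j.val, hj⟩ := by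
  simp only [embedBlock]
  rw [dif_pos hi, dif_pos hj]

lemma embedBlock_apply_lt_ge {N n : ℕ} (B : Matrix (Fin n) (Fin n) ℂ) (d : ℕ → ℂ)
    {i j : Fin N} (hi : i.val < n) (hj : ¬ j.val < n) :
    embedBlock N n B d i j = 0 := by
  simp only [embedBlock]
  rw [dif_pos hi, dif_neg hj]

lemma embedBlock_apply_diag {N n : ℕ} (B : Matrix (Fin n) (Fin n) ℂ) (d : ℕ → ℂ)
    {i j : Fin N} (hi : ¬ i.val < n) (hij : i.val = j.val) :
    embedBlock N n B d i j = d i.val := by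
  simp only [embedBlock]
  rw [dif_neg hi, if_pos hij]

lemma embedBlock_apply_ne {N n : ℕ} (B : Matrix (Fin n) (Fin n) ℂ) (d : ℕ → ℂ)
    {i j : Fin N} (hi : ¬ i.val < n) (hij : ¬ i.val = j.val) :
    embedBlock N n B d i j = 0 := by
  simp only [embedBlock]
  rw [dif_neg hi, if_neg hij]

lemma embedBlock_eq_submatrix (n m : ℕ) (B : Matrix (Fin n) (Fin n) ℂ) (d : ℕ → ℂ) :
    embedBlock (n + m) n B d =
      (Matrix.fromBlocks B 0 0 (Matrix.diagonal fun j : Fin m => d (n + j))).submatrix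
        finSumFinEquiv.symm finSumFinEquiv.symm := by
  ext i j
  induction i using Fin.addCases with
  | left i =>
    induction j using Fin.addCases with
    | left j =>
      simp [embedBlock, finSumFinEquiv_symm_apply_castAdd, Fin.is_lt]
    | right j =>
      simp [embedBlock, finSumFinEquiv_symm_apply_castAdd, finSumFinEquiv_symm_apply_natAdd,
        Fin.is_lt]
  | right i =>
    induction j using Fin.addCases with
    | left j =>
      simp [embedBlock, finSumFinEquiv_symm_apply_castAdd, finSumFinEquiv_symm_apply_natAdd]
      intro h; omega
    | right j =>
      simp only [embedBlock, finSumFinEquiv_symm_apply_natAdd, Matrix.submatrix_apply,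
        Matrix.fromBlocks_apply₂₂, Matrix.diagonal_apply, Fin.coe_natAdd]
      split_ifs <;> simp_all [Fin.ext_iff] <;> omega

lemma embedBlock_conjTranspose_mul (n m : ℕ) (B : Matrix (Fin n) (Fin n) ℂ) (d : ℕ → ℂ)
    (hB : Bᴴ * B = 1) (hd : ∀ j, star (d (n + j)) * d (n + j) = 1) :
    (embedBlock (n + m) n B d)ᴴ * embedBlock (n + m) n B d = 1 := by
  rw [embedBlock_eq_submatrix, conjTranspose_submatrix, submatrix_mul_equiv,
    fromBlocks_conjTranspose, fromBlocks_multiply]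
  simp only [conjTranspose_zero, diagonal_conjTranspose, diagonal_mul_diagonal,
    Matrix.mul_zero, Matrix.zero_mul, add_zero, zero_add, hB]
  have : (Matrix.diagonal fun j : Fin m => (star fun j : Fin m => d (n + j)) j * d (n + j)) = 1 := by
    rw [← Matrix.diagonal_one]
    refine congrArg Matrix.diagonal (funext fun j => ?_)
    simpa using hd j
  rw [this, fromBlocks_one, submatrix_one_equiv]

lemma embedBlock_det (n m : ℕ) (B : Matrix (Fin n) (Fin n) ℂ) (d : ℕ → ℂ) :
    (embedBlock (n + m) n B d).det = B.det * ∏ j : Fin m, d (n + j) := by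
  rw [embedBlock_eq_submatrix, det_submatrix_equiv_self, det_fromBlocks_zero₂₁, det_diagonal]

lemma exp_lamD (N : ℕ) (ω : ℝ) :
    NormedSpace.exp ((ω : ℂ) • lamD N N) =
      Matrix.diagonal (fun i : Fin N =>
        if i.val = N - 2 then Complex.exp (Complex.I * ω)
        else if i.val = N - 1 then Complex.exp (-(Complex.I * ω)) else 1) := by
  rw [lamD, ← Matrix.diagonal_smul, Matrix.exp_diagonal]
  refine congrArg Matrix.diagonal (funext fun i => ?_)
  rw [Pi.exp_def]
  simp only [Pi.smul_apply, smul_eq_mul]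
  split_ifs with h1 h2
  · rw [← Complex.exp_eq_exp_ℂ]; ring_nf
  · rw [← Complex.exp_eq_exp_ℂ]; ring_nf
  · simp [NormedSpace.exp_zero]

lemma mul_lamR (n : ℕ) (M : Matrix (Fin (n + 3)) (Fin (n + 3)) ℂ) (i j : Fin (n + 3)) :
    (M * lamR (n + 3) (n + 3)) i j =
      (if j.val = n + 2 then M i ⟨n + 1, by omega⟩ else 0)
        - (if j.val = n + 1 then M i ⟨n + 2, by omega⟩ else 0) := by
  rw [Matrix.mul_apply]
  have h : ∀ k : Fin (n + 3), M i k * lamR (n + 3) (n + 3) k j =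
      (if k = (⟨n + 1, by omega⟩ : Fin (n + 3)) then (if j.val = n + 2 then M i k else 0) else 0)
        - (if k = (⟨n + 2, by omega⟩ : Fin (n + 3)) then (if j.val = n + 1 then M i k else 0)
            else 0) := by
    intro k
    simp only [lamR, Fin.ext_iff]
    split_ifs <;> first | ring1 | (exfalso; omega)
  rw [Finset.sum_congr rfl fun k _ => h k, Finset.sum_sub_distrib,
    Finset.sum_ite_eq' Finset.univ, Finset.sum_ite_eq' Finset.univ]
  simp

lemma lamR_mul (n : ℕ) (M : Matrix (Fin (n + 3)) (Fin (n + 3)) ℂ) (i j : Fin (n + 3)) :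
    (lamR (n + 3) (n + 3) * M) i j =
      (if i.val = n + 1 then M ⟨n + 2, by omega⟩ j else 0)
        - (if i.val = n + 2 then M ⟨n + 1, by omega⟩ j else 0) := by
  rw [Matrix.mul_apply]
  have h : ∀ k : Fin (n + 3), lamR (n + 3) (n + 3) i k * M k j =
      (if k = (⟨n + 2, by omega⟩ : Fin (n + 3)) then (if i.val = n + 1 then M k j else 0) else 0)
        - (if k = (⟨n + 1, by omega⟩ : Fin (n + 3)) then (if i.val = n + 2 then M k j else 0)
            else 0) := by
    intro k
    simp only [lamR, Fin.ext_iff]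
    split_ifs <;> first | ring1 | (exfalso; omega)
  rw [Finset.sum_congr rfl fun k _ => h k, Finset.sum_sub_distrib,
    Finset.sum_ite_eq' Finset.univ, Finset.sum_ite_eq' Finset.univ]
  simp

/-- The centralizer `Z_K(a)` of `a = ℝ·λ_{N²-2}` in `K` is
`{diag(B, e^{-ix}, e^{-ix}) : B ∈ U(N-2), det(B)·e^{-2ix} = 1}`. -/
theorem centralizer_Ksub (N : ℕ) (hN : 3 ≤ N) :
    {g ∈ Ksub N | ∀ c : ℝ, g * ((c : ℂ) • lamR N N) * g⁻¹ = (c : ℂ) • lamR N N}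
      = {g | ∃ B : Matrix (Fin (N - 2)) (Fin (N - 2)) ℂ, ∃ x : ℝ,
          Bᴴ * B = 1 ∧ B.det * Complex.exp (-(2 * I * x)) = 1 ∧
          g = embedBlock N (N - 2) B (fun _ => Complex.exp (-(I * x)))} := by
  obtain ⟨n, rfl⟩ : ∃ n, N = n + 3 := ⟨N - 3, by omega⟩
  ext g
  simp only [Set.mem_setOf_eq, Set.mem_sep_iff]
  constructor
  · rintro ⟨hK, hc⟩
    obtain ⟨A₀, ω, hω, hAu₀, hAdet₀, hgeq₀⟩ := hK
    have hAex : ∃ A : Matrix (Fin (n + 2)) (Fin (n + 2)) ℂ, Aᴴ * A = 1 ∧ A.det = 1 ∧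
        g = embedBlock (n + 3) (n + 2) A (fun _ => 1) * NormedSpace.exp ((ω : ℂ) • lamD (n + 3) (n + 3)) :=
      ⟨A₀, hAu₀, hAdet₀, hgeq₀⟩
    obtain ⟨A, hAu, hAdet, hgeq⟩ := hAex
    set dv : Fin (n + 3) → ℂ := fun i =>
      if (i : ℕ) = n + 1 then Complex.exp (Complex.I * ω)
      else if (i : ℕ) = n + 2 then Complex.exp (-(Complex.I * ω)) else 1 with hdv
    have hexp : NormedSpace.exp ((ω : ℂ) • lamD (n + 3) (n + 3)) = Matrix.diagonal dv :=
      exp_lamD (n + 3) ω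
    have hgeq' : g = embedBlock (n + 3) (n + 2) A (fun _ => 1) * Matrix.diagonal dv := by
      rw [hgeq, hexp]
    -- unitarity of g
    have hEu : (embedBlock (n + 3) (n + 2) A (fun _ => 1))ᴴ
        * embedBlock (n + 3) (n + 2) A (fun _ => 1) = 1 :=
      embedBlock_conjTranspose_mul (n + 2) 1 A (fun _ => 1) hAu (fun j => by simp)
    have hdvu : ∀ i : Fin (n + 3), star (dv i) * dv i = 1 := by
      intro i
      simp only [hdv]
      split_ifs <;>
        · simp only [RCLike.star_def, ← Complex.exp_conj, ← Complex.exp_add, map_neg,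
            _root_.map_mul, Complex.conj_I, Complex.conj_ofReal, _root_.map_one]
          ring_nf
          try simp [Complex.exp_zero]
    have hDu : (Matrix.diagonal dv)ᴴ * Matrix.diagonal dv = 1 := by
      rw [diagonal_conjTranspose, diagonal_mul_diagonal, ← Matrix.diagonal_one]
      exact congrArg Matrix.diagonal (funext fun i => hdvu i)
    have hgu : gᴴ * g = 1 := by
      rw [hgeq', conjTranspose_mul, Matrix.mul_assoc, ← Matrix.mul_assoc
        (embedBlock (n + 3) (n + 2) A (fun _ => 1))ᴴ, hEu, Matrix.one_mul, hDu]
    have hginv : g⁻¹ = gᴴ := Matrix.inv_eq_left_inv hgu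
    -- commutation
    have hcomm : g * lamR (n + 3) (n + 3) = lamR (n + 3) (n + 3) * g := by
      have h1 := hc 1
      simp only [Complex.ofReal_one, one_smul] at h1
      have h2 := congrArg (· * g) h1
      rwa [Matrix.mul_assoc (g * lamR (n + 3) (n + 3)), hginv, hgu, Matrix.mul_one] at h2
    have key : ∀ i j : Fin (n + 3),
        (if (j : ℕ) = n + 2 then g i ⟨n + 1, by omega⟩ else 0)
            - (if (j : ℕ) = n + 1 then g i ⟨n + 2, by omega⟩ else 0)
          = (if (i : ℕ) = n + 1 then g ⟨n + 2, by omega⟩ j else 0)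
            - (if (i : ℕ) = n + 2 then g ⟨n + 1, by omega⟩ j else 0) := by
      intro i j
      rw [← mul_lamR, ← lamR_mul, hcomm]
    have hgij : ∀ i j : Fin (n + 3),
        g i j = embedBlock (n + 3) (n + 2) A (fun _ => 1) i j * dv j := by
      intro i j
      rw [hgeq', Matrix.mul_diagonal]
    have hdv1 : dv ⟨n + 1, by omega⟩ = Complex.exp (Complex.I * ω) := by
      simp [hdv]
    have hdv2 : dv ⟨n + 2, by omega⟩ = Complex.exp (-(Complex.I * ω)) := by
      simp [hdv]
    -- last column of A vanishes off the corner
    have hA1 : ∀ i : Fin (n + 2), (i : ℕ) < n + 1 → A i ⟨n + 1, by omega⟩ = 0 := by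
      intro i hi
      have hk := key ⟨(i : ℕ), by omega⟩ ⟨n + 2, by omega⟩
      rw [if_pos rfl, if_neg (show ¬((⟨n + 2, by omega⟩ : Fin (n + 3)) : ℕ) = n + 1 by simp),
        if_neg (show ¬((⟨(i : ℕ), by omega⟩ : Fin (n + 3)) : ℕ) = n + 1 by first | (simp; omega) | simp | omega),
        if_neg (show ¬((⟨(i : ℕ), by omega⟩ : Fin (n + 3)) : ℕ) = n + 2 by first | (simp; omega) | simp | omega)] at hk
      have hk2 : g ⟨(i : ℕ), by omega⟩ ⟨n + 1, by omega⟩ = 0 := by simpa using hk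
      rw [hgij, embedBlock_apply_lt A (fun _ => 1)
        (show ((⟨(i : ℕ), by omega⟩ : Fin (n + 3)) : ℕ) < n + 2 by first | (simp; omega) | simp | omega)
        (show ((⟨n + 1, by omega⟩ : Fin (n + 3)) : ℕ) < n + 2 by simp), hdv1] at hk2
      rcases mul_eq_zero.mp hk2 with h | h
      · exact h
      · exact absurd h (Complex.exp_ne_zero _)
    -- corner relation
    have ha : A ⟨n + 1, by omega⟩ ⟨n + 1, by omega⟩ * Complex.exp (Complex.I * ω)
        = Complex.exp (-(Complex.I * ω)) := by
      have hk := key ⟨n + 1, by omega⟩ ⟨n + 2, by omega⟩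
      rw [if_pos rfl, if_neg (show ¬((⟨n + 2, by omega⟩ : Fin (n + 3)) : ℕ) = n + 1 by simp),
        if_pos rfl,
        if_neg (show ¬((⟨n + 1, by omega⟩ : Fin (n + 3)) : ℕ) = n + 2 by simp)] at hk
      have hk2 : g ⟨n + 1, by omega⟩ ⟨n + 1, by omega⟩ = g ⟨n + 2, by omega⟩ ⟨n + 2, by omega⟩ := by
        simpa using hk
      rw [hgij, hgij, embedBlock_apply_lt A (fun _ => 1)
          (show ((⟨n + 1, by omega⟩ : Fin (n + 3)) : ℕ) < n + 2 by simp)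
          (show ((⟨n + 1, by omega⟩ : Fin (n + 3)) : ℕ) < n + 2 by simp),
        embedBlock_apply_diag A (fun _ => 1)
          (show ¬((⟨n + 2, by omega⟩ : Fin (n + 3)) : ℕ) < n + 2 by simp) rfl,
        hdv1, hdv2, one_mul] at hk2
      exact hk2
    have haz : A ⟨n + 1, by omega⟩ ⟨n + 1, by omega⟩ ≠ 0 := by
      intro h0
      rw [h0, zero_mul] at ha
      exact (Complex.exp_ne_zero _) ha.symm
    -- last row of A vanishes off the corner
    have hA2 : ∀ j : Fin (n + 2), (j : ℕ) < n + 1 → A ⟨n + 1, by omega⟩ j = 0 := by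
      intro j hj
      have h1 := congrFun (congrFun hAu j) ⟨n + 1, by omega⟩
      rw [Matrix.mul_apply] at h1
      have h2 : ∀ k : Fin (n + 2), k ≠ ⟨n + 1, by omega⟩ →
          Aᴴ j k * A k ⟨n + 1, by omega⟩ = 0 := by
        intro k hk
        have hklt : (k : ℕ) < n + 1 := by
          have h3 := k.isLt
          rcases Nat.lt_or_ge (k : ℕ) (n + 1) with h | h
          · exact h
          · exfalso; exact hk (Fin.ext (by first | (simp; omega) | simp | omega))
        rw [hA1 k hklt, mul_zero]
      rw [Fintype.sum_eq_single _ h2] at h1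
      rw [Matrix.one_apply_ne (Fin.ne_of_val_ne (by first | (simp; omega) | simp | omega))] at h1
      rcases mul_eq_zero.mp h1 with h | h
      · rw [Matrix.conjTranspose_apply] at h
        simpa using h
      · exact absurd h haz
    -- corner value
    have ha2 : A ⟨n + 1, by omega⟩ ⟨n + 1, by omega⟩ = Complex.exp (-(2 * I * ω)) := by
      have h2 : Complex.exp (-(2 * I * (ω : ℂ))) * Complex.exp (Complex.I * ω)
          = Complex.exp (-(Complex.I * ω)) := by
        rw [← Complex.exp_add]
        ring_nf
      exact mul_right_cancel₀ (Complex.exp_ne_zero _) (ha.trans h2.symm)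
    -- define B
    set B : Matrix (Fin (n + 1)) (Fin (n + 1)) ℂ :=
      fun i j => A ⟨i.val, by omega⟩ ⟨j.val, by omega⟩ with hBdef
    have hAblock : A = embedBlock (n + 1 + 1) (n + 1) B (fun _ => Complex.exp (-(2 * I * ω))) := by
      ext i j
      rcases Nat.lt_or_ge (i : ℕ) (n + 1) with hi | hi
      · rcases Nat.lt_or_ge (j : ℕ) (n + 1) with hj | hj
        · rw [embedBlock_apply_lt B _ hi hj]
        · rw [embedBlock_apply_lt_ge B _ hi (by omega)]
          have hj2 : j = ⟨n + 1, by omega⟩ := Fin.ext (by have := j.isLt; simp; omega)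
          rw [hj2]
          exact hA1 i hi
      · have hi2 : i = ⟨n + 1, by omega⟩ := Fin.ext (by have := i.isLt; simp; omega)
        rcases Nat.lt_or_ge (j : ℕ) (n + 1) with hj | hj
        · rw [embedBlock_apply_ne B _ (by omega) (by omega)]
          rw [hi2]
          exact hA2 j hj
        · have hj2 : j = ⟨n + 1, by omega⟩ := Fin.ext (by have := j.isLt; simp; omega)
          rw [embedBlock_apply_diag B _ (by omega) (by rw [hi2, hj2])]
          rw [hi2, hj2, ha2]
    -- unitarity of B
    have hBu : Bᴴ * B = 1 := by
      have h1 : (embedBlock (n + 1 + 1) (n + 1) B (fun _ => Complex.exp (-(2 * I * ω))))ᴴ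
          * embedBlock (n + 1 + 1) (n + 1) B (fun _ => Complex.exp (-(2 * I * ω))) = 1 := by
        rw [← hAblock]; exact hAu
      rw [embedBlock_eq_submatrix (n + 1) 1, conjTranspose_submatrix, submatrix_mul_equiv,
        fromBlocks_conjTranspose, fromBlocks_multiply] at h1
      have h2 := congrArg (fun M => M.submatrix finSumFinEquiv finSumFinEquiv) h1
      simp only [Matrix.submatrix_submatrix, Equiv.symm_comp_self, Matrix.submatrix_id_id,
        submatrix_one_equiv] at h2
      ext i j
      have h4 := congrFun (congrFun h2 (Sum.inl i)) (Sum.inl j)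
      simp only [conjTranspose_zero, Matrix.mul_zero, Matrix.zero_mul, add_zero, zero_add,
        Matrix.fromBlocks_apply₁₁] at h4
      rw [h4]
      by_cases hij : i = j <;> simp [Matrix.one_apply, hij]
    -- determinant of B
    have hBdet : B.det * Complex.exp (-(2 * I * ω)) = 1 := by
      have h1 : A.det = B.det * Complex.exp (-(2 * I * ω)) := by
        rw [hAblock, embedBlock_det (n + 1) 1]
        simp
      rw [← h1]; exact hAdet
    refine ⟨B, ω, hBu, hBdet, ?_⟩
    show g = embedBlock (n + 3) (n + 1) B (fun _ => Complex.exp (-(I * ω)))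
    ext i j
    rw [hgij]
    rcases Nat.lt_or_ge (i : ℕ) (n + 1) with hi | hi
    · rcases Nat.lt_or_ge (j : ℕ) (n + 1) with hj | hj
      · rw [embedBlock_apply_lt A (fun _ => 1) (by omega) (by omega),
          embedBlock_apply_lt B _ hi hj]
        have hdj : dv j = 1 := by
          simp only [hdv]; rw [if_neg (by omega), if_neg (by omega)]
        rw [hdj, mul_one]
      · have hj3 := j.isLt
        rcases (by omega : (j : ℕ) = n + 1 ∨ (j : ℕ) = n + 2) with hj2 | hj2
        · rw [embedBlock_apply_lt A (fun _ => 1) (by omega) (by omega),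
            embedBlock_apply_lt_ge B _ hi (by omega)]
          have h5 : A ⟨(i : ℕ), by omega⟩ ⟨(j : ℕ), by omega⟩ = 0 := by
            have hj4 : (⟨(j : ℕ), by omega⟩ : Fin (n + 2)) = ⟨n + 1, by omega⟩ :=
              Fin.ext (by simpa using hj2)
            rw [hj4]
            exact hA1 _ (by simpa using hi)
          rw [h5, zero_mul]
        · rw [embedBlock_apply_lt_ge A (fun _ => 1) (by omega) (by omega),
            embedBlock_apply_lt_ge B _ hi (by omega), zero_mul]
    · have hi3 := i.isLt
      rcases (by omega : (i : ℕ) = n + 1 ∨ (i : ℕ) = n + 2) with hi2 | hi2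
      · rcases Nat.lt_or_ge (j : ℕ) (n + 1) with hj | hj
        · rw [embedBlock_apply_lt A (fun _ => 1) (by omega) (by omega),
            embedBlock_apply_ne B _ (by omega) (by omega)]
          have h5 : A ⟨(i : ℕ), by omega⟩ ⟨(j : ℕ), by omega⟩ = 0 := by
            have hi4 : (⟨(i : ℕ), by omega⟩ : Fin (n + 2)) = ⟨n + 1, by omega⟩ :=
              Fin.ext (by simpa using hi2)
            rw [hi4]
            exact hA2 _ (by simpa using hj)
          rw [h5, zero_mul]
        · have hj3 := j.isLt
          rcases (by omega : (j : ℕ) = n + 1 ∨ (j : ℕ) = n + 2) with hj2 | hj2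
          · rw [embedBlock_apply_lt A (fun _ => 1) (by omega) (by omega),
              embedBlock_apply_diag B _ (by omega) (by omega)]
            have hdj : dv j = Complex.exp (Complex.I * ω) := by
              simp only [hdv]; rw [if_pos (by omega)]
            rw [hdj]
            have hA5 : A ⟨(i : ℕ), by omega⟩ ⟨(j : ℕ), by omega⟩
                = A ⟨n + 1, by omega⟩ ⟨n + 1, by omega⟩ := by
              congr 1 <;> exact Fin.ext (by first | (simp; omega) | simp | omega)
            rw [hA5, ha]
          · rw [embedBlock_apply_lt_ge A (fun _ => 1) (by omega) (by omega),
              embedBlock_apply_ne B _ (by omega) (by omega), zero_mul]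
      · rcases Nat.lt_or_ge (j : ℕ) (n + 1) with hj | hj
        · rw [embedBlock_apply_ne A (fun _ => 1) (by omega) (by omega),
            embedBlock_apply_ne B _ (by omega) (by omega), zero_mul]
        · have hj3 := j.isLt
          rcases (by omega : (j : ℕ) = n + 1 ∨ (j : ℕ) = n + 2) with hj2 | hj2
          · rw [embedBlock_apply_ne A (fun _ => 1) (by omega) (by omega),
              embedBlock_apply_ne B _ (by omega) (by omega), zero_mul]
          · rw [embedBlock_apply_diag A (fun _ => 1) (by omega) (by omega),
              embedBlock_apply_diag B _ (by omega) (by omega)]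
            have hdj : dv j = Complex.exp (-(Complex.I * ω)) := by
              simp only [hdv]; rw [if_neg (by omega), if_pos (by omega)]
            rw [hdj, one_mul]
  · rintro ⟨B₀, x, hBu₀, hBdet₀, hgeq₀⟩
    have hBex : ∃ B : Matrix (Fin (n + 1)) (Fin (n + 1)) ℂ, Bᴴ * B = 1 ∧
        B.det * Complex.exp (-(2 * I * x)) = 1 ∧
        g = embedBlock (n + 3) (n + 1) B (fun _ => Complex.exp (-(I * x))) :=
      ⟨B₀, hBu₀, hBdet₀, hgeq₀⟩
    obtain ⟨B, hBu, hBdet, hgeq⟩ := hBex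
    have hstar : star (Complex.exp (-(I * (x : ℂ)))) * Complex.exp (-(I * x)) = 1 := by
      simp only [RCLike.star_def, ← Complex.exp_conj, ← Complex.exp_add, map_neg,
        _root_.map_mul, Complex.conj_I, Complex.conj_ofReal]
      ring_nf
      exact Complex.exp_zero
    have hstar2 : star (Complex.exp (-(2 * I * (x : ℂ)))) * Complex.exp (-(2 * I * x)) = 1 := by
      simp only [RCLike.star_def, ← Complex.exp_conj, ← Complex.exp_add, map_neg,
        _root_.map_mul, Complex.conj_I, Complex.conj_ofReal, map_ofNat]
      ring_nf
      exact Complex.exp_zero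
    -- entries of g in the special rows/columns
    have hgcol : ∀ i : Fin (n + 3), ∀ v : ℕ, (v = n + 1 ∨ v = n + 2) → ∀ hv : v < n + 3,
        g i ⟨v, hv⟩ = if (i : ℕ) = v then Complex.exp (-(I * x)) else 0 := by
      intro i v hor hv
      rw [hgeq]
      rcases Nat.lt_or_ge (i : ℕ) (n + 1) with hi | hi
      · rw [embedBlock_apply_lt_ge B _ hi (show ¬ v < n + 1 by omega), if_neg (by omega)]
      · by_cases hij : (i : ℕ) = v
        · rw [embedBlock_apply_diag B _ (by omega) hij, if_pos hij]
        · rw [embedBlock_apply_ne B _ (by omega) hij, if_neg hij]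
    have hgrow : ∀ v : ℕ, (v = n + 1 ∨ v = n + 2) → ∀ hv : v < n + 3, ∀ j : Fin (n + 3),
        g ⟨v, hv⟩ j = if (j : ℕ) = v then Complex.exp (-(I * x)) else 0 := by
      intro v hor hv j
      rw [hgeq]
      by_cases hij : v = (j : ℕ)
      · rw [embedBlock_apply_diag B _ (show ¬ v < n + 1 by omega) hij, if_pos hij.symm]
      · rw [embedBlock_apply_ne B _ (show ¬ v < n + 1 by omega) hij,
          if_neg (fun h => hij h.symm)]
    -- commutation
    have hcomm : g * lamR (n + 3) (n + 3) = lamR (n + 3) (n + 3) * g := by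
      ext i j
      rw [mul_lamR, lamR_mul, hgcol i (n + 1) (Or.inl rfl) (by omega),
        hgcol i (n + 2) (Or.inr rfl) (by omega), hgrow (n + 1) (Or.inl rfl) (by omega) j,
        hgrow (n + 2) (Or.inr rfl) (by omega) j]
      split_ifs <;> first | ring1 | (exfalso; omega)
    have hgu : gᴴ * g = 1 := by
      rw [hgeq]
      exact embedBlock_conjTranspose_mul (n + 1) 2 B _ hBu (fun j => hstar)
    have hginv : g⁻¹ = gᴴ := Matrix.inv_eq_left_inv hgu
    have hright : g * g⁻¹ = 1 := by
      rw [hginv]; exact mul_eq_one_comm.mp hgu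
    -- the angle
    set ω : ℝ := 2 * Real.pi * Int.fract (x / (2 * Real.pi)) with hωdef
    have hπ := Real.two_pi_pos
    have hω0 : 0 ≤ ω := mul_nonneg (le_of_lt hπ) (Int.fract_nonneg _)
    have hω2 : ω < 2 * Real.pi := by
      have h := Int.fract_lt_one (x / (2 * Real.pi))
      calc ω < 2 * Real.pi * 1 := by
            rw [hωdef]; exact mul_lt_mul_of_pos_left h hπ
        _ = 2 * Real.pi := mul_one _
    have hωx : (ω : ℂ) = (x : ℂ) - (⌊x / (2 * Real.pi)⌋ : ℤ) * (2 * (Real.pi : ℂ)) := by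
      have h1 : ω = x - (⌊x / (2 * Real.pi)⌋ : ℤ) * (2 * Real.pi) := by
        rw [hωdef, Int.fract]
        have h2π : (2 : ℝ) * Real.pi ≠ 0 := ne_of_gt hπ
        field_simp
      rw [h1]
      push_cast
      ring
    have hexpω : Complex.exp (I * ω) = Complex.exp (I * x) := by
      have h1 : Complex.exp (((-⌊x / (2 * Real.pi)⌋ : ℤ) : ℂ) * (2 * (Real.pi : ℂ) * I)) = 1 :=
        Complex.exp_int_mul_two_pi_mul_I _
      have h2 : I * (ω : ℂ) = I * x + ((-⌊x / (2 * Real.pi)⌋ : ℤ) : ℂ) * (2 * (Real.pi : ℂ) * I) := by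
        rw [hωx]; push_cast; ring
      rw [h2, Complex.exp_add, h1, mul_one]
    have hexpω' : Complex.exp (-(I * (ω : ℂ))) = Complex.exp (-(I * x)) := by
      rw [Complex.exp_neg, Complex.exp_neg, hexpω]
    have hexp2 : Complex.exp (-(2 * I * (ω : ℂ))) = Complex.exp (-(2 * I * x)) := by
      rw [show -(2 * I * (ω : ℂ)) = -(I * ω) + -(I * ω) by ring,
        show -(2 * I * (x : ℂ)) = -(I * x) + -(I * x) by ring,
        Complex.exp_add, Complex.exp_add, hexpω']
    -- diagonal vector of the exponential
    set dv : Fin (n + 3) → ℂ := fun i =>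
      if (i : ℕ) = n + 1 then Complex.exp (Complex.I * ω)
      else if (i : ℕ) = n + 2 then Complex.exp (-(Complex.I * ω)) else 1 with hdv
    have hexp : NormedSpace.exp ((ω : ℂ) • lamD (n + 3) (n + 3)) = Matrix.diagonal dv :=
      exp_lamD (n + 3) ω
    -- the SU(N-1) block
    set A : Matrix (Fin (n + 2)) (Fin (n + 2)) ℂ :=
      embedBlock (n + 1 + 1) (n + 1) B (fun _ => Complex.exp (-(2 * I * x))) with hAdef
    have hAu : Aᴴ * A = 1 :=
      embedBlock_conjTranspose_mul (n + 1) 1 B _ hBu (fun j => hstar2)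
    have hAdet : A.det = 1 := by
      have h1 : A.det = B.det * ∏ j : Fin 1, Complex.exp (-(2 * I * x)) :=
        embedBlock_det (n + 1) 1 B _
      rw [h1]
      simpa using hBdet
    refine ⟨⟨A, ω, ⟨hω0, hω2⟩, hAu, hAdet, ?_⟩, ?_⟩
    · -- g = diag(A,1) * exp(ω lamD)
      show g = embedBlock (n + 3) (n + 2) A (fun _ => 1) * NormedSpace.exp ((ω : ℂ) • lamD (n + 3) (n + 3))
      rw [hexp, hgeq]
      ext i j
      rw [Matrix.mul_diagonal]
      rcases Nat.lt_or_ge (i : ℕ) (n + 1) with hi | hi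
      · rcases Nat.lt_or_ge (j : ℕ) (n + 1) with hj | hj
        · rw [embedBlock_apply_lt B _ hi hj,
            embedBlock_apply_lt A (fun _ => 1) (by omega) (by omega)]
          have hdj : dv j = 1 := by
            simp only [hdv]; rw [if_neg (by omega), if_neg (by omega)]
          rw [hdj, mul_one, hAdef,
            embedBlock_apply_lt B _ (by first | (simp; omega) | simp | omega)
              (by first | (simp; omega) | simp | omega)]
        · have hj3 := j.isLt
          rcases (by omega : (j : ℕ) = n + 1 ∨ (j : ℕ) = n + 2) with hj2 | hj2
          · rw [embedBlock_apply_lt_ge B _ hi (by omega),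
              embedBlock_apply_lt A (fun _ => 1) (by omega) (by omega), hAdef,
              embedBlock_apply_lt_ge B _ (by first | (simp; omega) | simp | omega)
                (by first | (simp; omega) | simp | omega), zero_mul]
          · rw [embedBlock_apply_lt_ge B _ hi (by omega),
              embedBlock_apply_lt_ge A (fun _ => 1) (by omega) (by omega), zero_mul]
      · have hi3 := i.isLt
        rcases (by omega : (i : ℕ) = n + 1 ∨ (i : ℕ) = n + 2) with hi2 | hi2
        · rcases Nat.lt_or_ge (j : ℕ) (n + 1) with hj | hj
          · rw [embedBlock_apply_ne B _ (by omega) (by omega),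
              embedBlock_apply_lt A (fun _ => 1) (by omega) (by omega), hAdef,
              embedBlock_apply_ne B _ (by first | (simp; omega) | simp | omega)
                (by first | (simp; omega) | simp | omega), zero_mul]
          · have hj3 := j.isLt
            rcases (by omega : (j : ℕ) = n + 1 ∨ (j : ℕ) = n + 2) with hj2 | hj2
            · rw [embedBlock_apply_diag B _ (by omega) (by omega),
                embedBlock_apply_lt A (fun _ => 1) (by omega) (by omega), hAdef,
                embedBlock_apply_diag B _ (by first | (simp; omega) | simp | omega)
                  (by first | (simp; omega) | simp | omega)]
              have hdj : dv j = Complex.exp (Complex.I * ω) := by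
                simp only [hdv]; rw [if_pos (by omega)]
              rw [hdj, hexpω, ← Complex.exp_add]
              congr 1
              ring
            · rw [embedBlock_apply_ne B _ (by omega) (by omega),
                embedBlock_apply_lt_ge A (fun _ => 1) (by omega) (by omega), zero_mul]
        · rcases Nat.lt_or_ge (j : ℕ) (n + 2) with hj | hj
          · rw [embedBlock_apply_ne B _ (by omega) (by omega),
              embedBlock_apply_ne A (fun _ => 1) (by omega) (by omega), zero_mul]
          · have hj3 := j.isLt
            have hj2 : (j : ℕ) = n + 2 := by omega
            rw [embedBlock_apply_diag B _ (by omega) (by omega),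
              embedBlock_apply_diag A (fun _ => 1) (by omega) (by omega)]
            have hdj : dv j = Complex.exp (-(Complex.I * ω)) := by
              simp only [hdv]; rw [if_neg (by omega), if_pos (by omega)]
            rw [hdj, one_mul, hexpω']
    · -- the commutation property
      intro c
      calc g * ((c : ℂ) • lamR (n + 3) (n + 3)) * g⁻¹
          = (c : ℂ) • (g * lamR (n + 3) (n + 3) * g⁻¹) := by
            rw [mul_smul_comm, smul_mul_assoc]
        _ = (c : ℂ) • (lamR (n + 3) (n + 3) * (g * g⁻¹)) := by
            rw [hcomm, Matrix.mul_assoc]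
        _ = (c : ℂ) • lamR (n + 3) (n + 3) := by
            rw [hright, Matrix.mul_one]
end

section
/- For any t ∈ ℝ and ψ₁, ψ₂, φ₂ ∈ ℝ, the following identity holds in SU(3): e^{tλ₈} e^{ψ₁λ₂} e^{φ₂λ₈} e^{ψ₂λ₇} = e^{-(t/2)λ₃} e^{ψ₁λ₂} e^{(φ₂ + 3t/4)λ₈} e^{ψ₂λ₇} e^{(t/4)λ₈} e^{(t/2)λ₃}, where λ₂, λ₃, λ₇, λ₈ are the named real basis elements of su(3): λ₂ = E₁₂ - E₂₁, λ₃ = i(E₁₁ - E₂₂), λ₇ = E₂₃ - E₃₂, λ₈ = i(E₂₂ - E₃₃). -/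
open Complex Matrix NormedSpace

private lemma my_exp_comm (A B : Matrix (Fin 3) (Fin 3) ℂ) (h : Commute A B) :
    exp A * exp B = exp B * exp A := by
  rw [← Matrix.exp_add_of_commute A B h, ← Matrix.exp_add_of_commute B A h.symm, add_comm]

set_option maxHeartbeats 1000000 in
private lemma su3_key (t ψ₁ ψ₂ φ₂ : ℝ) :
    exp ((t : ℂ) • (!![0, 0, 0; 0, I, 0; 0, 0, -I] : Matrix (Fin 3) (Fin 3) ℂ))
        * exp ((ψ₁ : ℂ) • (!![0, 1, 0; -1, 0, 0; 0, 0, 0] : Matrix (Fin 3) (Fin 3) ℂ))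
        * exp ((φ₂ : ℂ) • !![0, 0, 0; 0, I, 0; 0, 0, -I])
        * exp ((ψ₂ : ℂ) • (!![0, 0, 0; 0, 0, 1; 0, -1, 0] : Matrix (Fin 3) (Fin 3) ℂ))
      = exp ((-(t / 2) : ℂ) • !![I, 0, 0; 0, -I, 0; 0, 0, 0])
          * exp ((ψ₁ : ℂ) • (!![0, 1, 0; -1, 0, 0; 0, 0, 0] : Matrix (Fin 3) (Fin 3) ℂ))
          * exp (((φ₂ + 3 * t / 4 : ℝ) : ℂ) • !![0, 0, 0; 0, I, 0; 0, 0, -I])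
          * exp ((ψ₂ : ℂ) • (!![0, 0, 0; 0, 0, 1; 0, -1, 0] : Matrix (Fin 3) (Fin 3) ℂ))
          * exp (((t / 4 : ℝ) : ℂ) • !![0, 0, 0; 0, I, 0; 0, 0, -I])
          * exp (((t / 2 : ℝ) : ℂ) • !![I, 0, 0; 0, -I, 0; 0, 0, 0]) := by
  set M2 : Matrix (Fin 3) (Fin 3) ℂ := !![0, 1, 0; -1, 0, 0; 0, 0, 0] with hM2
  set M3 : Matrix (Fin 3) (Fin 3) ℂ := !![I, 0, 0; 0, -I, 0; 0, 0, 0] with hM3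
  set M7 : Matrix (Fin 3) (Fin 3) ℂ := !![0, 0, 0; 0, 0, 1; 0, -1, 0] with hM7
  set M8 : Matrix (Fin 3) (Fin 3) ℂ := !![0, 0, 0; 0, I, 0; 0, 0, -I] with hM8
  set D : Matrix (Fin 3) (Fin 3) ℂ := !![I*(t/2),0,0;0,I*(t/2),0;0,0,-(I*t)] with hD
  set D' : Matrix (Fin 3) (Fin 3) ℂ :=
    !![I*(t/2),0,0;0,-(I*(t/4)),0;0,0,-(I*(t/4))] with hD'
  have comm_tac : True := trivial
  have b1 : Commute M3 D := by
    unfold Commute SemiconjBy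
    ext i j
    fin_cases i <;> fin_cases j <;>
      simp [hM3, hD, Matrix.mul_apply, Fin.sum_univ_three, Matrix.vecHead, Matrix.vecTail] <;> ring
  have b2 : Commute D M2 := by
    unfold Commute SemiconjBy
    ext i j
    fin_cases i <;> fin_cases j <;>
      simp [hM2, hD, Matrix.mul_apply, Fin.sum_univ_three, Matrix.vecHead, Matrix.vecTail] <;> ring
  have b3 : Commute D M8 := by
    unfold Commute SemiconjBy
    ext i j
    fin_cases i <;> fin_cases j <;>
      simp [hM8, hD, Matrix.mul_apply, Fin.sum_univ_three, Matrix.vecHead, Matrix.vecTail] <;> ring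
  have b4 : Commute M8 D' := by
    unfold Commute SemiconjBy
    ext i j
    fin_cases i <;> fin_cases j <;>
      simp [hM8, hD', Matrix.mul_apply, Fin.sum_univ_three, Matrix.vecHead, Matrix.vecTail] <;> ring
  have b5 : Commute D' M7 := by
    unfold Commute SemiconjBy
    ext i j
    fin_cases i <;> fin_cases j <;>
      simp [hM7, hD', Matrix.mul_apply, Fin.sum_univ_three, Matrix.vecHead, Matrix.vecTail] <;> ring
  have b6 : Commute M8 M3 := by
    unfold Commute SemiconjBy
    ext i j
    fin_cases i <;> fin_cases j <;>
      simp [hM8, hM3, Matrix.mul_apply, Fin.sum_univ_three, Matrix.vecHead, Matrix.vecTail] <;> ring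
  have c1 : Commute ((-(t/2) : ℂ) • M3) D := b1.smul_left _
  have c2 : Commute D ((ψ₁ : ℂ) • M2) := b2.smul_right _
  have c3 : Commute D ((φ₂ : ℂ) • M8) := b3.smul_right _
  have c4 : Commute (((φ₂ + 3 * t / 4 : ℝ) : ℂ) • M8) D' := b4.smul_left _
  have c5 : Commute D' ((ψ₂ : ℂ) • M7) := b5.smul_right _
  have c6 : Commute (((t / 4 : ℝ) : ℂ) • M8) (((t / 2 : ℝ) : ℂ) • M3) := (b6.smul_left _).smul_right _
  -- linear decompositions
  have m1 : (t : ℂ) • M8 = (-(t/2) : ℂ) • M3 + D := by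
    ext i j
    fin_cases i <;> fin_cases j <;>
      simp [hM3, hM8, hD, Matrix.vecHead, Matrix.vecTail] <;> ring
  have m2 : D + (φ₂ : ℂ) • M8 = ((φ₂ + 3 * t / 4 : ℝ) : ℂ) • M8 + D' := by
    ext i j
    fin_cases i <;> fin_cases j <;>
      simp [hM8, hD, hD', Matrix.vecHead, Matrix.vecTail] <;> push_cast <;> ring
  have m3 : D' = ((t / 4 : ℝ) : ℂ) • M8 + ((t / 2 : ℝ) : ℂ) • M3 := by
    ext i j
    fin_cases i <;> fin_cases j <;>
      simp [hM8, hM3, hD', Matrix.vecHead, Matrix.vecTail] <;> push_cast <;> ring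
  -- exponential splitting
  have e1 : exp ((t : ℂ) • M8) = exp ((-(t/2) : ℂ) • M3) * exp D := by
    rw [m1, Matrix.exp_add_of_commute _ _ c1]
  have s1 : exp D * exp ((ψ₁ : ℂ) • M2) = exp ((ψ₁ : ℂ) • M2) * exp D :=
    my_exp_comm _ _ c2
  have s2 : exp D * exp ((φ₂ : ℂ) • M8)
      = exp (((φ₂ + 3 * t / 4 : ℝ) : ℂ) • M8) * exp D' := by
    rw [← Matrix.exp_add_of_commute _ _ c3, m2, Matrix.exp_add_of_commute _ _ c4]
  have s3 : exp D' * exp ((ψ₂ : ℂ) • M7) = exp ((ψ₂ : ℂ) • M7) * exp D' :=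
    my_exp_comm _ _ c5
  have s4 : exp D' = exp (((t / 4 : ℝ) : ℂ) • M8) * exp (((t / 2 : ℝ) : ℂ) • M3) := by
    rw [m3, Matrix.exp_add_of_commute _ _ c6]
  rw [e1]
  simp only [mul_assoc]
  rw [← mul_assoc (exp D), s1, mul_assoc, ← mul_assoc (exp D), s2, mul_assoc,
    s3, s4]

/-- The 'pulling exponentials through' identity in `SU(3)`:
`e^{tL8} e^{ψ₁L2} e^{φ₂L8} e^{ψ₂L7}
 = e^{-(t/2)L3} e^{ψ₁L2} e^{(φ₂+3t/4)L8} e^{ψ₂L7} e^{(t/4)L8} e^{(t/2)L3}`. -/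
theorem su3_pulling_exponentials (t ψ₁ ψ₂ φ₂ : ℝ) :
    let L2 : Matrix (Fin 3) (Fin 3) ℂ := !![0, 1, 0; -1, 0, 0; 0, 0, 0]
    let L3 : Matrix (Fin 3) (Fin 3) ℂ := !![I, 0, 0; 0, -I, 0; 0, 0, 0]
    let L7 : Matrix (Fin 3) (Fin 3) ℂ := !![0, 0, 0; 0, 0, 1; 0, -1, 0]
    let L8 : Matrix (Fin 3) (Fin 3) ℂ := !![0, 0, 0; 0, I, 0; 0, 0, -I]
    exp ((t : ℂ) • L8) * exp ((ψ₁ : ℂ) • L2) * exp ((φ₂ : ℂ) • L8)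
        * exp ((ψ₂ : ℂ) • L7)
      = exp ((-(t / 2) : ℂ) • L3) * exp ((ψ₁ : ℂ) • L2)
          * exp (((φ₂ + 3 * t / 4 : ℝ) : ℂ) • L8) * exp ((ψ₂ : ℂ) • L7)
          * exp (((t / 4 : ℝ) : ℂ) • L8) * exp (((t / 2 : ℝ) : ℂ) • L3) := by
  exact su3_key t ψ₁ ψ₂ φ₂
end
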